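/- Let E be a real inner product space, U : E → ℝ twice continuously differentiable, U_mid ∈ ℝ, Ψ(x) := log(cosh(U(x) − U_mid)), α(x) := −tanh(U(x) − U_mid). Suppose L ≥ 0 bounds the operator norm of the second derivative of Ψ everywhere, |Ψ(x)| ≤ M for all x, and s₀, …, s_T is a trajectory with ‖s_{t+1} − s_t‖ ≤ D for every t < T, where T ≥ 1. Then the time-averaged gradient-alignment reward satisfies | (1/T) ∑_{t=0}^{T−1} α(s_t)⟪∇U(s_t), s_{t+1} − s_t⟫ | ≤ 2M/T + (L/2) D². -/

import Mathlib

open Real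

/-- Second-order Taylor bound: if the second derivative is bounded by `L`, then
`|f b - f a - f'(a)(b-a)| ≤ L/2 ‖b-a‖²`. -/
lemma taylor2_bound {E : Type*} [NormedAddCommGroup E] [NormedSpace ℝ E]
    (f : E → ℝ) (hf : ContDiff ℝ 2 f) {L : ℝ}
    (hL : ∀ x, ‖fderiv ℝ (fderiv ℝ f) x‖ ≤ L) (a b : E) :
    |f b - f a - fderiv ℝ f a (b - a)| ≤ L / 2 * ‖b - a‖ ^ 2 := by
  have hdf : Differentiable ℝ f := hf.differentiable two_ne_zero
  have hdf' : Differentiable ℝ (fderiv ℝ f) :=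
    (hf.fderiv_right (m := 1) le_rfl).differentiable one_ne_zero
  have hlip : ∀ x y : E, ‖fderiv ℝ f x - fderiv ℝ f y‖ ≤ L * ‖x - y‖ := by
    intro x y
    exact Convex.norm_image_sub_le_of_norm_fderiv_le
      (fun z _ => (hdf' z)) (fun z _ => hL z) convex_univ trivial trivial
  set v := b - a with hv
  set c : ℝ := fderiv ℝ f a v with hc
  set g : ℝ → ℝ := fun θ => f (a + θ • v) - θ * c with hgdef
  have hline : ∀ θ : ℝ, HasDerivAt (fun θ : ℝ => a + θ • v) v θ := by
    intro θ
    simpa using ((hasDerivAt_id θ).smul_const v).const_add a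
  have hg' : ∀ θ : ℝ, HasDerivAt g (fderiv ℝ f (a + θ • v) v - c) θ := by
    intro θ
    have h1 : HasDerivAt (fun θ : ℝ => f (a + θ • v)) (fderiv ℝ f (a + θ • v) v) θ :=
      (hdf (a + θ • v)).hasFDerivAt.comp_hasDerivAt θ (hline θ)
    have h2 : HasDerivAt (fun θ : ℝ => θ * c) c θ := by
      simpa using (hasDerivAt_id θ).mul_const c
    exact h1.sub h2
  set F : ℝ → ℝ := fun θ => g θ - g 0 with hF
  set B : ℝ → ℝ := fun θ => L * ‖v‖ ^ 2 * θ ^ 2 / 2 with hB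
  have hB' : ∀ x : ℝ, HasDerivAt B (L * ‖v‖ ^ 2 * x) x := by
    intro x
    have : HasDerivAt (fun θ : ℝ => L * ‖v‖ ^ 2 * θ ^ 2 / 2)
        (L * ‖v‖ ^ 2 * (2 * x ^ 1) / 2) x := (((hasDerivAt_pow 2 x).const_mul _).div_const 2)
    simpa using this.congr_deriv (by ring)
  have key : ∀ θ ∈ Set.Icc (0:ℝ) 1, ‖F θ‖ ≤ B θ := by
    apply image_norm_le_of_norm_deriv_right_le_deriv_boundary
      (f' := fun θ => fderiv ℝ f (a + θ • v) v - c)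
    · exact fun θ _ => ((hg' θ).sub_const (g 0)).continuousAt.continuousWithinAt
    · exact fun θ _ => ((hg' θ).sub_const (g 0)).hasDerivWithinAt
    · simp [hF, hB]
    · exact hB'
    · intro θ hθ
      have h1 : fderiv ℝ f (a + θ • v) v - c = (fderiv ℝ f (a + θ • v) - fderiv ℝ f a) v := by
        simp [hc]
      rw [h1]
      calc ‖(fderiv ℝ f (a + θ • v) - fderiv ℝ f a) v‖
          ≤ ‖fderiv ℝ f (a + θ • v) - fderiv ℝ f a‖ * ‖v‖ :=
            ContinuousLinearMap.le_opNorm _ _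
        _ ≤ (L * ‖a + θ • v - a‖) * ‖v‖ := by
            exact mul_le_mul_of_nonneg_right (hlip _ _) (norm_nonneg _)
        _ = L * ‖v‖ ^ 2 * θ := by
            have : ‖a + θ • v - a‖ = θ * ‖v‖ := by
              rw [add_sub_cancel_left, norm_smul, Real.norm_eq_abs, abs_of_nonneg hθ.1]
            rw [this]; ring
  have h1 := key 1 (by norm_num)
  have hF1 : F 1 = f b - f a - fderiv ℝ f a (b - a) := by
    simp [hF, hgdef, hc, hv]
    ring
  have hB1 : B 1 = L / 2 * ‖b - a‖ ^ 2 := by simp [hB, hv]; ring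
  rw [← hF1, ← hB1]
  exact h1

/-- **Finite-horizon version of Claim 2 of Theorem 1.**
With `Ψ(x) := log cosh (U x - U_mid)` and `α(x) := - tanh (U x - U_mid)`, if
`‖∇²Ψ‖ ≤ L` everywhere, `|Ψ| ≤ M` everywhere, and the trajectory `s₀, …, s_T`
(with `T ≥ 1`) has steps of size at most `D`, then the time-averaged
gradient-alignment reward satisfies
`|(1/T) ∑_{t<T} α(s_t) ⟪∇U(s_t), s_{t+1} - s_t⟫| ≤ 2M/T + (L/2) D²`. -/
theorem time_averaged_gradient_alignment_bound
    {E : Type*} [NormedAddCommGroup E] [InnerProductSpace ℝ E] [CompleteSpace E]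
    (U : E → ℝ) (hU : ContDiff ℝ 2 U) (Umid : ℝ) (L M D : ℝ) (hL0 : 0 ≤ L) :
    let Ψ : E → ℝ := fun x => Real.log (Real.cosh (U x - Umid))
    let α : E → ℝ := fun x => - Real.tanh (U x - Umid)
    (∀ x : E, ‖fderiv ℝ (fderiv ℝ Ψ) x‖ ≤ L) →
    (∀ x : E, |Ψ x| ≤ M) →
    ∀ (T : ℕ) (s : ℕ → E), 1 ≤ T →
      (∀ t < T, ‖s (t + 1) - s t‖ ≤ D) →
      |(1 / (T : ℝ)) *
          ∑ t ∈ Finset.range T, α (s t) * (inner ℝ (gradient U (s t)) (s (t + 1) - s t) : ℝ)| ≤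
        2 * M / T + L / 2 * D ^ 2 := by
  intro Ψ α hLbound hM T s hT hD
  -- Ψ is C²
  have hΨ : ContDiff ℝ 2 Ψ := by
    apply ContDiff.log
    · exact Real.contDiff_cosh.comp (hU.sub contDiff_const)
    · intro x; positivity
  -- fderiv of Ψ
  have hfderivΨ : ∀ x : E, fderiv ℝ Ψ x = Real.tanh (U x - Umid) • fderiv ℝ U x := by
    intro x
    have hUx : HasFDerivAt U (fderiv ℝ U x) x :=
      ((hU.differentiable two_ne_zero) x).hasFDerivAt
    have hsub : HasFDerivAt (fun y => U y - Umid) (fderiv ℝ U x) x := hUx.sub_const Umid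
    have hcosh : HasDerivAt Real.cosh (Real.sinh (U x - Umid)) (U x - Umid) :=
      Real.hasDerivAt_cosh _
    have hlog : HasDerivAt Real.log (Real.cosh (U x - Umid))⁻¹ (Real.cosh (U x - Umid)) :=
      Real.hasDerivAt_log (by positivity)
    have hcomp : HasDerivAt (fun r => Real.log (Real.cosh r))
        ((Real.cosh (U x - Umid))⁻¹ * Real.sinh (U x - Umid)) (U x - Umid) :=
      hlog.comp _ hcosh
    have hΨx : HasFDerivAt Ψ
        (((Real.cosh (U x - Umid))⁻¹ * Real.sinh (U x - Umid)) • fderiv ℝ U x) x :=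
      by have := hcomp.comp_hasFDerivAt x hsub; exact this
    have htanh : (Real.cosh (U x - Umid))⁻¹ * Real.sinh (U x - Umid)
        = Real.tanh (U x - Umid) := by
      rw [Real.tanh_eq_sinh_div_cosh]; ring
    rw [← htanh]
    exact hΨx.fderiv
  -- the summand equals the negated directional derivative of Ψ
  have hterm : ∀ t : ℕ, α (s t) * (inner ℝ (gradient U (s t)) (s (t + 1) - s t) : ℝ)
      = -(fderiv ℝ Ψ (s t) (s (t + 1) - s t)) := by
    intro t
    have hgrad : (inner ℝ (gradient U (s t)) (s (t + 1) - s t) : ℝ)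
        = fderiv ℝ U (s t) (s (t + 1) - s t) := InnerProductSpace.toDual_symm_apply
    rw [hgrad, hfderivΨ]
    simp [α, ContinuousLinearMap.smul_apply]
  -- Taylor bound per step
  have htaylor : ∀ t < T,
      |Ψ (s (t + 1)) - Ψ (s t) - fderiv ℝ Ψ (s t) (s (t + 1) - s t)| ≤ L / 2 * D ^ 2 := by
    intro t ht
    have h := taylor2_bound Ψ hΨ hLbound (s t) (s (t + 1))
    refine h.trans ?_
    have hstep := hD t ht
    have hD0 : (0:ℝ) ≤ D := le_trans (norm_nonneg _) hstep
    have : ‖s (t + 1) - s t‖ ^ 2 ≤ D ^ 2 := by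
      apply pow_le_pow_left₀ (norm_nonneg _) hstep
    nlinarith
  -- telescoping sum bound
  have hsum : |∑ t ∈ Finset.range T, α (s t) * (inner ℝ (gradient U (s t)) (s (t + 1) - s t) : ℝ)|
      ≤ 2 * M + T * (L / 2 * D ^ 2) := by
    have hsplit : ∀ t : ℕ, α (s t) * (inner ℝ (gradient U (s t)) (s (t + 1) - s t) : ℝ)
        = (Ψ (s t) - Ψ (s (t + 1)))
          + (Ψ (s (t + 1)) - Ψ (s t) - fderiv ℝ Ψ (s t) (s (t + 1) - s t)) := by
      intro t; rw [hterm t]; ring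
    calc |∑ t ∈ Finset.range T, α (s t) * (inner ℝ (gradient U (s t)) (s (t + 1) - s t) : ℝ)|
        = |(Ψ (s 0) - Ψ (s T))
            + ∑ t ∈ Finset.range T,
              (Ψ (s (t + 1)) - Ψ (s t) - fderiv ℝ Ψ (s t) (s (t + 1) - s t))| := by
          congr 1
          rw [Finset.sum_congr rfl (fun t _ => hsplit t), Finset.sum_add_distrib]
          congr 1
          have := Finset.sum_range_sub (fun t => Ψ (s t)) T
          have h2 : ∑ t ∈ Finset.range T, (Ψ (s t) - Ψ (s (t + 1)))
              = -(∑ t ∈ Finset.range T, (Ψ (s (t+1)) - Ψ (s t))) := by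
            rw [← Finset.sum_neg_distrib]; apply Finset.sum_congr rfl; intros; ring
          rw [h2, this]; ring
      _ ≤ |Ψ (s 0) - Ψ (s T)|
            + |∑ t ∈ Finset.range T,
              (Ψ (s (t + 1)) - Ψ (s t) - fderiv ℝ Ψ (s t) (s (t + 1) - s t))| := abs_add_le _ _
      _ ≤ 2 * M + T * (L / 2 * D ^ 2) := by
          gcongr ?_ + ?_
          · have := hM (s 0); have := hM (s T)
            calc |Ψ (s 0) - Ψ (s T)| ≤ |Ψ (s 0)| + |Ψ (s T)| := abs_sub _ _
              _ ≤ 2 * M := by linarith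
          · calc |∑ t ∈ Finset.range T,
                (Ψ (s (t + 1)) - Ψ (s t) - fderiv ℝ Ψ (s t) (s (t + 1) - s t))|
                ≤ ∑ t ∈ Finset.range T,
                  |Ψ (s (t + 1)) - Ψ (s t) - fderiv ℝ Ψ (s t) (s (t + 1) - s t)| :=
                  Finset.abs_sum_le_sum_abs _ _
              _ ≤ ∑ _t ∈ Finset.range T, (L / 2 * D ^ 2) := by
                  apply Finset.sum_le_sum
                  intro t ht
                  exact htaylor t (Finset.mem_range.mp ht)
              _ = T * (L / 2 * D ^ 2) := by
                  rw [Finset.sum_const, Finset.card_range]; simp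
  -- divide by T
  have hT0 : (0:ℝ) < T := by exact_mod_cast hT
  rw [abs_mul, abs_of_pos (by positivity : (0:ℝ) < 1 / (T:ℝ))]
  have heq : (1 / (T:ℝ)) * (2 * M + T * (L / 2 * D ^ 2)) = 2 * M / T + L / 2 * D ^ 2 := by
    field_simp
  calc (1 / (T:ℝ)) *
        |∑ t ∈ Finset.range T, α (s t) * (inner ℝ (gradient U (s t)) (s (t + 1) - s t) : ℝ)|
      ≤ (1 / (T:ℝ)) * (2 * M + T * (L / 2 * D ^ 2)) := by
        exact mul_le_mul_of_nonneg_left hsum (by positivity)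
    _ = 2 * M / T + L / 2 * D ^ 2 := heq
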